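/- (Pohozaev identity on circles for holomorphic vector fields.) Let u : ℝ² → ℝ^m be twice continuously differentiable and satisfy (∂u/∂x_i) · Δu = 0 almost everywhere in ℝ² for i = 1, 2. Let X = X₁ + iX₂ : ℂ → ℂ be an entire holomorphic function identified with the vector field (X₁, X₂) on ℝ². Then for every x₀ ∈ ℝ² and every r > 0: 2∫_{∂B(x₀,r)} ((ν·∇)u) · ((X·∇)u) dσ = ∫_{∂B(x₀,r)} (X · ν) |∇u|² dσ, where ν(x) = (x - x₀)/r is the outward unit normal; equivalently, parametrizing ∂B(x₀,r) by θ ↦ x₀ + r e^{iθ}, 2∫₀^{2π} ((cos θ ∂₁u + sin θ ∂₂u) · (X₁ ∂₁u + X₂ ∂₂u))(x₀ + re^{iθ}) r dθ = ∫₀^{2π} ((X₁ cos θ + X₂ sin θ)|∇u|²)(x₀ + re^{iθ}) r dθ. -/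

import Mathlib

open Real MeasureTheory intervalIntegral

/-- First partial derivative `∂₁u` of a map `u : ℝ² → ℝ^m`. -/
noncomputable def pd1 {m : ℕ} (u : ℝ × ℝ → EuclideanSpace ℝ (Fin m)) (x : ℝ × ℝ) :
    EuclideanSpace ℝ (Fin m) :=
  fderiv ℝ u x (1, 0)

/-- Second partial derivative `∂₂u` of a map `u : ℝ² → ℝ^m`. -/
noncomputable def pd2 {m : ℕ} (u : ℝ × ℝ → EuclideanSpace ℝ (Fin m)) (x : ℝ × ℝ) :
    EuclideanSpace ℝ (Fin m) :=
  fderiv ℝ u x (0, 1)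

/-- The componentwise Laplacian `Δu = ∂₁₁u + ∂₂₂u` of a map `u : ℝ² → ℝ^m`. -/
noncomputable def lap2 {m : ℕ} (u : ℝ × ℝ → EuclideanSpace ℝ (Fin m)) (x : ℝ × ℝ) :
    EuclideanSpace ℝ (Fin m) :=
  fderiv ℝ (pd1 u) x (1, 0) + fderiv ℝ (pd2 u) x (0, 1)

/-- **Pohozaev identity on circles for holomorphic vector fields.** Let `u : ℝ² → ℝ^m` be
`C²` with `∂ᵢu · Δu = 0` a.e. for `i = 1,2`, and let `X = X₁ + iX₂ : ℂ → ℂ` be entire,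
identified with the vector field `(X₁, X₂)`. Then for every `x₀ ∈ ℝ²` and `r > 0`,
parametrizing `∂B(x₀,r)` by `θ ↦ x₀ + r e^{iθ}`,
`2 ∫₀^{2π} ((ν·∇)u) · ((X·∇)u) r dθ = ∫₀^{2π} (X·ν) |∇u|² r dθ`. -/

lemma differentiable_of_CR (P Q : ℝ × ℝ → ℝ) (hP : Differentiable ℝ P) (hQ : Differentiable ℝ Q)
    (hCR1 : ∀ v, fderiv ℝ P v (1, 0) = fderiv ℝ Q v (0, 1))
    (hCR2 : ∀ v, fderiv ℝ P v (0, 1) = - fderiv ℝ Q v (1, 0)) :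
    Differentiable ℂ (fun z : ℂ => (P (z.re, z.im) : ℂ) + (Q (z.re, z.im) : ℂ) * Complex.I) := by
  intro z
  set v : ℝ × ℝ := (z.re, z.im) with hv
  set a : ℝ := fderiv ℝ P v (1, 0) with ha
  set b : ℝ := fderiv ℝ Q v (1, 0) with hb
  have hF : HasFDerivAt (fun p : ℝ × ℝ => (P p : ℂ) + (Q p : ℂ) * Complex.I)
      (Complex.ofRealCLM.comp (fderiv ℝ P v) +
        (fderiv ℝ Q v).smulRight Complex.I) v := by
    have h1 : HasFDerivAt (fun p : ℝ × ℝ => (P p : ℂ))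
        (Complex.ofRealCLM.comp (fderiv ℝ P v)) v :=
      Complex.ofRealCLM.hasFDerivAt.comp v (hP v).hasFDerivAt
    have h2 : HasFDerivAt (fun p : ℝ × ℝ => (Q p : ℂ) * Complex.I)
        ((fderiv ℝ Q v).smulRight Complex.I) v := by
      have := ((hQ v).hasFDerivAt.smul_const (Complex.I))
      simpa [smul_eq_mul, ← Complex.ofReal_mul, mul_comm] using this.const_smul (1:ℝ)
    exact h1.add h2
  -- compose with ℂ ≃ ℝ×ℝ
  have hρ : HasFDerivAt (fun w : ℂ => (w.re, w.im))
      (Complex.equivRealProdCLM.toContinuousLinearMap) z :=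
    Complex.equivRealProdCLM.toContinuousLinearMap.hasFDerivAt
  have hf : HasFDerivAt (fun z : ℂ => (P (z.re, z.im) : ℂ) + (Q (z.re, z.im) : ℂ) * Complex.I)
      ((Complex.ofRealCLM.comp (fderiv ℝ P v) +
        (fderiv ℝ Q v).smulRight Complex.I).comp
        Complex.equivRealProdCLM.toContinuousLinearMap) z := hF.comp z hρ
  set c : ℂ := (a : ℂ) + (b : ℂ) * Complex.I with hc
  have key : HasFDerivAt (fun z : ℂ => (P (z.re, z.im) : ℂ) + (Q (z.re, z.im) : ℂ) * Complex.I)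
      ((c • (ContinuousLinearMap.id ℂ ℂ)) : ℂ →L[ℂ] ℂ) z := by
    apply hasFDerivAt_of_restrictScalars ℝ hf
    ext w
    have hw : w = w.re • (1:ℂ) + w.im • Complex.I := by
      simp [Complex.real_smul, Complex.re_add_im]
    simp only [ContinuousLinearMap.coe_restrictScalars']
    conv_rhs => rw [hw]
    rw [map_add, ContinuousLinearMap.map_smul, ContinuousLinearMap.map_smul]
    have e1 : (Complex.equivRealProdCLM.toContinuousLinearMap) (1:ℂ) = ((1:ℝ), (0:ℝ)) := by
      rfl
    have e2 : (Complex.equivRealProdCLM.toContinuousLinearMap) (Complex.I) = ((0:ℝ), (1:ℝ)) := by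
      rfl
    simp only [ContinuousLinearMap.smul_apply, ContinuousLinearMap.coe_id', id_eq,
      ContinuousLinearMap.comp_apply, e1, e2, ContinuousLinearMap.add_apply,
      ContinuousLinearMap.coe_comp', Function.comp_apply, ContinuousLinearMap.smulRight_apply]
    rw [hw]
    have c1 := hCR1 v
    have c2 := hCR2 v
    simp only [Complex.ofRealCLM_apply, ← ha, ← hb, c2, ← c1]
    simp only [Complex.real_smul, smul_eq_mul]
    push_cast
    simp only [Complex.add_re, Complex.add_im, Complex.mul_re, Complex.mul_im, Complex.I_re,
      Complex.I_im, Complex.ofReal_re, Complex.ofReal_im, Complex.one_re, Complex.one_im]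
    push_cast
    linear_combination (↑b * ↑w.im : ℂ) * Complex.I_sq
  exact key.differentiableAt

section main
variable {m : ℕ} {u : ℝ × ℝ → EuclideanSpace ℝ (Fin m)}

lemma hasFDerivAt_pd1 (hu : ContDiff ℝ 2 u) (x : ℝ × ℝ) :
    HasFDerivAt (pd1 u)
      ((ContinuousLinearMap.apply ℝ (EuclideanSpace ℝ (Fin m)) ((1:ℝ), (0:ℝ))).comp
        (fderiv ℝ (fderiv ℝ u) x)) x :=
  (ContinuousLinearMap.apply ℝ (EuclideanSpace ℝ (Fin m)) ((1:ℝ), (0:ℝ))).hasFDerivAt.comp x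
    (((hu.fderiv_right (le_refl 2)).differentiable one_ne_zero) x).hasFDerivAt

lemma hasFDerivAt_pd2 (hu : ContDiff ℝ 2 u) (x : ℝ × ℝ) :
    HasFDerivAt (pd2 u)
      ((ContinuousLinearMap.apply ℝ (EuclideanSpace ℝ (Fin m)) ((0:ℝ), (1:ℝ))).comp
        (fderiv ℝ (fderiv ℝ u) x)) x :=
  (ContinuousLinearMap.apply ℝ (EuclideanSpace ℝ (Fin m)) ((0:ℝ), (1:ℝ))).hasFDerivAt.comp x
    (((hu.fderiv_right (le_refl 2)).differentiable one_ne_zero) x).hasFDerivAt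

lemma fderiv_pd1_apply (hu : ContDiff ℝ 2 u) (x w : ℝ × ℝ) :
    fderiv ℝ (pd1 u) x w = fderiv ℝ (fderiv ℝ u) x w (1, 0) := by
  rw [(hasFDerivAt_pd1 hu x).fderiv]; rfl

lemma fderiv_pd2_apply (hu : ContDiff ℝ 2 u) (x w : ℝ × ℝ) :
    fderiv ℝ (pd2 u) x w = fderiv ℝ (fderiv ℝ u) x w (0, 1) := by
  rw [(hasFDerivAt_pd2 hu x).fderiv]; rfl

lemma ePQ (hu : ContDiff ℝ 2 u) (x : ℝ × ℝ) (w : ℝ × ℝ) :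
    fderiv ℝ (fun y => (inner ℝ (pd1 u y) (pd1 u y) : ℝ) - inner ℝ (pd2 u y) (pd2 u y)) x w
      = ((inner ℝ (pd1 u x) (fderiv ℝ (fderiv ℝ u) x w (1,0)) : ℝ)
          + inner ℝ (fderiv ℝ (fderiv ℝ u) x w (1,0)) (pd1 u x))
        - ((inner ℝ (pd2 u x) (fderiv ℝ (fderiv ℝ u) x w (0,1)) : ℝ)
          + inner ℝ (fderiv ℝ (fderiv ℝ u) x w (0,1)) (pd2 u x)) := by
  have dA : DifferentiableAt ℝ (pd1 u) x := (hasFDerivAt_pd1 hu x).differentiableAt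
  have dB : DifferentiableAt ℝ (pd2 u) x := (hasFDerivAt_pd2 hu x).differentiableAt
  rw [fderiv_fun_sub (dA.inner ℝ dA) (dB.inner ℝ dB)]
  rw [ContinuousLinearMap.sub_apply, fderiv_inner_apply ℝ dA dA w, fderiv_inner_apply ℝ dB dB w,
    fderiv_pd1_apply hu, fderiv_pd2_apply hu]

lemma eQ (hu : ContDiff ℝ 2 u) (x : ℝ × ℝ) (w : ℝ × ℝ) :
    fderiv ℝ (fun y => -(2 * (inner ℝ (pd1 u y) (pd2 u y) : ℝ))) x w
      = -(2 * ((inner ℝ (pd1 u x) (fderiv ℝ (fderiv ℝ u) x w (0,1)) : ℝ)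
          + inner ℝ (fderiv ℝ (fderiv ℝ u) x w (1,0)) (pd2 u x))) := by
  have dA : DifferentiableAt ℝ (pd1 u) x := (hasFDerivAt_pd1 hu x).differentiableAt
  have dB : DifferentiableAt ℝ (pd2 u) x := (hasFDerivAt_pd2 hu x).differentiableAt
  rw [fderiv_fun_neg, ContinuousLinearMap.neg_apply, fderiv_const_mul (dA.inner ℝ dB),
    ContinuousLinearMap.smul_apply, fderiv_inner_apply ℝ dA dB w,
    fderiv_pd1_apply hu, fderiv_pd2_apply hu]
  simp [smul_eq_mul]

lemma CR1 (hu : ContDiff ℝ 2 u) (x : ℝ × ℝ)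
    (h1 : (inner ℝ (pd1 u x) (lap2 u x) : ℝ) = 0) :
    fderiv ℝ (fun y => (inner ℝ (pd1 u y) (pd1 u y) : ℝ) - inner ℝ (pd2 u y) (pd2 u y)) x (1,0)
      = fderiv ℝ (fun y => -(2 * (inner ℝ (pd1 u y) (pd2 u y) : ℝ))) x (0,1) := by
  rw [ePQ hu x (1,0), eQ hu x (0,1)]
  set L := fderiv ℝ (fderiv ℝ u) x with hL
  have hsym : ∀ v w, L v w = L w v := hu.contDiffAt.isSymmSndFDerivAt (by simp)
  have hlap : (inner ℝ (pd1 u x) (L (1,0) (1,0) + L (0,1) (0,1)) : ℝ) = 0 := by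
    have e : lap2 u x = L (1,0) (1,0) + L (0,1) (0,1) := by
      rw [lap2, fderiv_pd1_apply hu, fderiv_pd2_apply hu]
    rwa [e] at h1
  rw [inner_add_right] at hlap
  rw [hsym (1,0) (0,1)]
  have i1 : (inner ℝ (L (1,0) (1,0)) (pd1 u x) : ℝ) = inner ℝ (pd1 u x) (L (1,0) (1,0)) :=
    real_inner_comm _ _
  have i2 : (inner ℝ (L (0,1) (1,0)) (pd2 u x) : ℝ) = inner ℝ (pd2 u x) (L (0,1) (1,0)) :=
    real_inner_comm _ _
  linear_combination 2 * hlap + i1 + i2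

lemma CR2 (hu : ContDiff ℝ 2 u) (x : ℝ × ℝ)
    (h2 : (inner ℝ (pd2 u x) (lap2 u x) : ℝ) = 0) :
    fderiv ℝ (fun y => (inner ℝ (pd1 u y) (pd1 u y) : ℝ) - inner ℝ (pd2 u y) (pd2 u y)) x (0,1)
      = - fderiv ℝ (fun y => -(2 * (inner ℝ (pd1 u y) (pd2 u y) : ℝ))) x (1,0) := by
  rw [ePQ hu x (0,1), eQ hu x (1,0)]
  set L := fderiv ℝ (fderiv ℝ u) x with hL
  have hsym : ∀ v w, L v w = L w v := hu.contDiffAt.isSymmSndFDerivAt (by simp)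
  have hlap : (inner ℝ (pd2 u x) (L (1,0) (1,0)) : ℝ) + inner ℝ (pd2 u x) (L (0,1) (0,1)) = 0 := by
    have e : lap2 u x = L (1,0) (1,0) + L (0,1) (0,1) := by
      rw [lap2, fderiv_pd1_apply hu, fderiv_pd2_apply hu]
    rw [e, inner_add_right] at h2
    exact h2
  rw [hsym (1,0) (0,1)]
  have i1 : (inner ℝ (L (0,1) (1,0)) (pd1 u x) : ℝ) = inner ℝ (pd1 u x) (L (0,1) (1,0)) :=
    real_inner_comm _ _
  have i2 : (inner ℝ (L (0,1) (0,1)) (pd2 u x) : ℝ) = inner ℝ (pd2 u x) (L (0,1) (0,1)) :=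
    real_inner_comm _ _
  have i3 : (inner ℝ (L (1,0) (1,0)) (pd2 u x) : ℝ) = inner ℝ (pd2 u x) (L (1,0) (1,0)) :=
    real_inner_comm _ _
  linear_combination i1 - i2 - 2 * i3 - 2 * hlap

end main

lemma inner_combo {E : Type*} [NormedAddCommGroup E] [InnerProductSpace ℝ E]
    (a b : E) (c s x1 x2 : ℝ) :
    (inner ℝ (c • a + s • b) (x1 • a + x2 • b) : ℝ)
      = c * x1 * ‖a‖ ^ 2 + (c * x2 + s * x1) * inner ℝ a b + s * x2 * ‖b‖ ^ 2 := by
  simp only [inner_add_left, inner_add_right, real_inner_smul_left, real_inner_smul_right,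
    real_inner_self_eq_norm_sq]
  rw [real_inner_comm b a]; ring

theorem pohozaev_on_circles_holomorphic {m : ℕ} (u : ℝ × ℝ → EuclideanSpace ℝ (Fin m))
    (hu : ContDiff ℝ 2 u)
    (heq : ∀ᵐ x : ℝ × ℝ,
      (inner ℝ (pd1 u x) (lap2 u x) : ℝ) = 0 ∧ (inner ℝ (pd2 u x) (lap2 u x) : ℝ) = 0)
    (X : ℂ → ℂ) (hX : Differentiable ℂ X) :
    ∀ (x₀ : ℝ × ℝ) (r : ℝ), 0 < r →
      2 * ∫ θ in (0:ℝ)..(2 * π),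
          (inner ℝ (Real.cos θ • pd1 u (x₀.1 + r * Real.cos θ, x₀.2 + r * Real.sin θ)
                + Real.sin θ • pd2 u (x₀.1 + r * Real.cos θ, x₀.2 + r * Real.sin θ))
              ((X ((x₀.1 + r * Real.cos θ) + (x₀.2 + r * Real.sin θ) * Complex.I)).re •
                  pd1 u (x₀.1 + r * Real.cos θ, x₀.2 + r * Real.sin θ)
                + (X ((x₀.1 + r * Real.cos θ) + (x₀.2 + r * Real.sin θ) * Complex.I)).im •
                  pd2 u (x₀.1 + r * Real.cos θ, x₀.2 + r * Real.sin θ)) : ℝ) * r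
        = ∫ θ in (0:ℝ)..(2 * π),
            ((X ((x₀.1 + r * Real.cos θ) + (x₀.2 + r * Real.sin θ) * Complex.I)).re * Real.cos θ
              + (X ((x₀.1 + r * Real.cos θ) + (x₀.2 + r * Real.sin θ) * Complex.I)).im *
                Real.sin θ) *
              (‖pd1 u (x₀.1 + r * Real.cos θ, x₀.2 + r * Real.sin θ)‖ ^ 2
                + ‖pd2 u (x₀.1 + r * Real.cos θ, x₀.2 + r * Real.sin θ)‖ ^ 2) * r := by
  intro x₀ r hr
  -- continuity facts
  have cdA : ContDiff ℝ 1 (pd1 u) := (hu.fderiv_right (le_refl 2)).clm_apply contDiff_const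
  have cdB : ContDiff ℝ 1 (pd2 u) := (hu.fderiv_right (le_refl 2)).clm_apply contDiff_const
  have cA : Continuous (pd1 u) := cdA.continuous
  have cB : Continuous (pd2 u) := cdB.continuous
  have cL : Continuous (lap2 u) := by
    have c1 : Continuous fun x => fderiv ℝ (pd1 u) x ((1:ℝ), (0:ℝ)) :=
      (cdA.continuous_fderiv_apply one_ne_zero).comp (continuous_id.prodMk continuous_const)
    have c2 : Continuous fun x => fderiv ℝ (pd2 u) x ((0:ℝ), (1:ℝ)) :=
      (cdB.continuous_fderiv_apply one_ne_zero).comp (continuous_id.prodMk continuous_const)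
    exact c1.add c2
  -- a.e. hypotheses upgraded to everywhere
  have h1 : ∀ x, (inner ℝ (pd1 u x) (lap2 u x) : ℝ) = 0 := by
    have hc : Continuous fun x => (inner ℝ (pd1 u x) (lap2 u x) : ℝ) := cA.inner cL
    have := (Continuous.ae_eq_iff_eq volume hc continuous_const).mp
      (heq.mono fun x hx => hx.1)
    exact fun x => congrFun this x
  have h2 : ∀ x, (inner ℝ (pd2 u x) (lap2 u x) : ℝ) = 0 := by
    have hc : Continuous fun x => (inner ℝ (pd2 u x) (lap2 u x) : ℝ) := cB.inner cL
    have := (Continuous.ae_eq_iff_eq volume hc continuous_const).mp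
      (heq.mono fun x hx => hx.2)
    exact fun x => congrFun this x
  -- the Hopf differential
  set P : ℝ × ℝ → ℝ := fun y => (inner ℝ (pd1 u y) (pd1 u y) : ℝ) - inner ℝ (pd2 u y) (pd2 u y)
    with hPdef
  set Q : ℝ × ℝ → ℝ := fun y => -(2 * (inner ℝ (pd1 u y) (pd2 u y) : ℝ)) with hQdef
  have hPd : Differentiable ℝ P := fun x =>
    ((hasFDerivAt_pd1 hu x).differentiableAt.inner ℝ
      (hasFDerivAt_pd1 hu x).differentiableAt).sub
      ((hasFDerivAt_pd2 hu x).differentiableAt.inner ℝ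
        (hasFDerivAt_pd2 hu x).differentiableAt)
  have hQd : Differentiable ℝ Q := fun x =>
    (((hasFDerivAt_pd1 hu x).differentiableAt.inner ℝ
      (hasFDerivAt_pd2 hu x).differentiableAt).const_mul 2).neg
  set f : ℂ → ℂ := fun z => (P (z.re, z.im) : ℂ) + (Q (z.re, z.im) : ℂ) * Complex.I with hfdef
  have hfd : Differentiable ℂ f :=
    differentiable_of_CR P Q hPd hQd (fun v => CR1 hu v (h1 v)) (fun v => CR2 hu v (h2 v))
  set c : ℂ := (x₀.1 : ℂ) + (x₀.2 : ℂ) * Complex.I with hcdef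
  have hXf : Differentiable ℂ fun z => X z * f z := hX.mul hfd
  have hC : (∮ z in C(c, r), X z * f z) = 0 :=
    Complex.circleIntegral_eq_zero_of_differentiable_on_off_countable hr.le Set.countable_empty
      hXf.continuous.continuousOn (fun z _ => hXf z)
  have hC' : ∫ θ in (0:ℝ)..(2 * π),
      deriv (circleMap c r) θ • (X (circleMap c r θ) * f (circleMap c r θ)) = 0 := hC
  have cW : Continuous fun θ : ℝ =>
      deriv (circleMap c r) θ • (X (circleMap c r θ) * f (circleMap c r θ)) := by
    have hm : Continuous fun θ : ℝ => circleMap 0 r θ * Complex.I :=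
      (continuous_circleMap 0 r).mul continuous_const
    simp only [deriv_circleMap]
    exact hm.smul (hXf.continuous.comp (continuous_circleMap c r))
  have him : ∫ θ in (0:ℝ)..(2 * π),
      (deriv (circleMap c r) θ • (X (circleMap c r θ) * f (circleMap c r θ))).im = 0 := by
    have h := Complex.imCLM.intervalIntegral_comp_comm
      ((cW.intervalIntegrable (0:ℝ) (2 * π)) : IntervalIntegrable _ volume _ _)
    rw [hC'] at h
    simpa using h
  -- the circle parametrization matches
  have hz : ∀ θ : ℝ, circleMap c r θ
      = ((↑x₀.1 + ↑r * ↑(Real.cos θ) + (↑x₀.2 + ↑r * ↑(Real.sin θ)) * Complex.I : ℂ)) := by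
    intro θ
    simp only [circleMap, hcdef, Complex.ext_iff, Complex.add_re, Complex.add_im, Complex.mul_re,
      Complex.mul_im, Complex.ofReal_re, Complex.ofReal_im, Complex.I_re, Complex.I_im,
      Complex.exp_ofReal_mul_I_re, Complex.exp_ofReal_mul_I_im]
    constructor <;> ring
  set G : ℝ → ℝ := fun θ =>
      (inner ℝ (Real.cos θ • pd1 u (x₀.1 + r * Real.cos θ, x₀.2 + r * Real.sin θ)
            + Real.sin θ • pd2 u (x₀.1 + r * Real.cos θ, x₀.2 + r * Real.sin θ))
          ((X ((x₀.1 + r * Real.cos θ) + (x₀.2 + r * Real.sin θ) * Complex.I)).re •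
              pd1 u (x₀.1 + r * Real.cos θ, x₀.2 + r * Real.sin θ)
            + (X ((x₀.1 + r * Real.cos θ) + (x₀.2 + r * Real.sin θ) * Complex.I)).im •
              pd2 u (x₀.1 + r * Real.cos θ, x₀.2 + r * Real.sin θ)) : ℝ) * r with hGdef
  set H : ℝ → ℝ := fun θ =>
      ((X ((x₀.1 + r * Real.cos θ) + (x₀.2 + r * Real.sin θ) * Complex.I)).re * Real.cos θ
        + (X ((x₀.1 + r * Real.cos θ) + (x₀.2 + r * Real.sin θ) * Complex.I)).im *
          Real.sin θ) *
        (‖pd1 u (x₀.1 + r * Real.cos θ, x₀.2 + r * Real.sin θ)‖ ^ 2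
          + ‖pd2 u (x₀.1 + r * Real.cos θ, x₀.2 + r * Real.sin θ)‖ ^ 2) * r with hHdef
  -- pointwise identity
  have hpt : ∀ θ : ℝ, 2 * G θ - H θ
      = (deriv (circleMap c r) θ • (X (circleMap c r θ) * f (circleMap c r θ))).im := by
    intro θ
    rw [deriv_circleMap, hz θ, hGdef, hHdef]
    simp only [hfdef]
    simp only [Complex.add_re, Complex.add_im, Complex.mul_re, Complex.mul_im,
      Complex.ofReal_re, Complex.ofReal_im, Complex.I_re, Complex.I_im]
    rw [inner_combo]
    simp only [hPdef, hQdef, real_inner_self_eq_norm_sq]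
    simp only [circleMap, smul_eq_mul, zero_add]
    simp only [mul_zero, zero_mul, mul_one, sub_zero, add_zero, zero_add,
      Complex.exp_ofReal_mul_I_re, Complex.exp_ofReal_mul_I_im, Complex.mul_re, Complex.mul_im,
      Complex.add_re, Complex.add_im, Complex.ofReal_re, Complex.ofReal_im,
      Complex.I_re, Complex.I_im]
    ring
  -- continuity of the integrands
  have cz : Continuous fun θ : ℝ =>
      ((↑x₀.1 + ↑r * ↑(Real.cos θ) + (↑x₀.2 + ↑r * ↑(Real.sin θ)) * Complex.I : ℂ)) := by
    fun_prop
  have cp : Continuous fun θ : ℝ => (x₀.1 + r * Real.cos θ, x₀.2 + r * Real.sin θ) := by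
    fun_prop
  have cXre : Continuous fun θ : ℝ =>
      (X ((x₀.1 + r * Real.cos θ) + (x₀.2 + r * Real.sin θ) * Complex.I)).re :=
    Complex.continuous_re.comp (hX.continuous.comp cz)
  have cXim : Continuous fun θ : ℝ =>
      (X ((x₀.1 + r * Real.cos θ) + (x₀.2 + r * Real.sin θ) * Complex.I)).im :=
    Complex.continuous_im.comp (hX.continuous.comp cz)
  have cG : Continuous G := by
    rw [hGdef]
    exact (((continuous_cos.smul (cA.comp cp)).add (continuous_sin.smul (cB.comp cp))).inner
      ((cXre.smul (cA.comp cp)).add (cXim.smul (cB.comp cp)))).mul continuous_const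
  have cH : Continuous H := by
    rw [hHdef]
    exact (((cXre.mul continuous_cos).add (cXim.mul continuous_sin)).mul
      (((cA.comp cp).norm.pow 2).add ((cB.comp cp).norm.pow 2))).mul continuous_const
  have hGi : IntervalIntegrable G volume 0 (2 * π) := cG.intervalIntegrable _ _
  have hHi : IntervalIntegrable H volume 0 (2 * π) := cH.intervalIntegrable _ _
  rw [← sub_eq_zero]
  have e1 : 2 * (∫ θ in (0:ℝ)..(2 * π), G θ) - ∫ θ in (0:ℝ)..(2 * π), H θ
      = ∫ θ in (0:ℝ)..(2 * π), (2 * G θ - H θ) := by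
    rw [intervalIntegral.integral_sub (hGi.const_mul 2) hHi,
      intervalIntegral.integral_const_mul]
  rw [e1, intervalIntegral.integral_congr (g := fun θ =>
      (deriv (circleMap c r) θ • (X (circleMap c r θ) * f (circleMap c r θ))).im)
      (fun θ _ => hpt θ)]
  exact him
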